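/- Let f : F_2^n → Z_{2^k} be a gbent function. If n is even or k ≥ 3, then there exists a generalized Boolean function f* : F_2^n → Z_{2^k} (the dual of f) such that H_f(u) = 2^{n/2} ζ^{f*(u)} for all u ∈ F_2^n. If n is odd and k = 2, then for every u ∈ F_2^n one has H_f(u) = 2^{(n−1)/2}(ε_1 + ε_2 i) for some signs ε_1, ε_2 ∈ {+1, −1} (depending on u). -/

import Mathlib

open scoped BigOperators

/-- `zeta q = e^{2πi/q}`, a primitive `q`-th root of unity. -/
noncomputable def zeta (q : ℕ) : ℂ := Complex.exp (2 * Real.pi * Complex.I / (q : ℂ))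

/-- The generalized Walsh-Hadamard transform of `f : F_2^n → Z_q`. -/
noncomputable def gwht (n q : ℕ) (f : (Fin n → ZMod 2) → ZMod q) (u : Fin n → ZMod 2) : ℂ :=
  ∑ x : Fin n → ZMod 2, zeta q ^ (f x).val * (-1 : ℂ) ^ (∑ i, u i * x i : ZMod 2).val

/-- `f` is gbent if `|H_f(u)| = 2^{n/2}` for all `u`. -/
def IsGbent (n q : ℕ) (f : (Fin n → ZMod 2) → ZMod q) : Prop :=
  ∀ u, ‖gwht n q f u‖ = Real.sqrt 2 ^ n

/-- Walsh-Hadamard transform of a Boolean function. -/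
noncomputable def wht (n : ℕ) (g : (Fin n → ZMod 2) → ZMod 2) (u : Fin n → ZMod 2) : ℂ :=
  ∑ x : Fin n → ZMod 2, (-1 : ℂ) ^ (g x + ∑ i, u i * x i : ZMod 2).val

/-- A Boolean function is bent if `|W_g(u)| = 2^{n/2}` for all `u`. -/
def IsBent (n : ℕ) (g : (Fin n → ZMod 2) → ZMod 2) : Prop :=
  ∀ u, ‖wht n g u‖ = Real.sqrt 2 ^ n

/-- A Boolean function is semibent if `|W_g(u)| ∈ {0, 2^{(n+1)/2}}` for all `u`. -/
def IsSemibent (n : ℕ) (g : (Fin n → ZMod 2) → ZMod 2) : Prop :=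
  ∀ u, wht n g u = 0 ∨ ‖wht n g u‖ = 2 ^ ((n + 1) / 2)



section AuxiliaryLemmas

open Polynomial IntermediateField NumberField

section Aux
open Polynomial Complex

lemma zeta_prim (q : ℕ) (hq : q ≠ 0) : IsPrimitiveRoot (zeta q) q := by
  simpa [zeta] using Complex.isPrimitiveRoot_exp q hq

noncomputable def gsum (n q : ℕ) (f : (Fin n → ZMod 2) → ZMod q) (u : Fin n → ZMod 2)
    {R : Type*} [CommRing R] (ξ : R) : R :=
  ∑ x : Fin n → ZMod 2, ξ ^ (f x).val * (-1 : R) ^ (∑ i, u i * x i : ZMod 2).val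

lemma gwht_eq_gsum (n q : ℕ) (f : (Fin n → ZMod 2) → ZMod q) (u) :
    gwht n q f u = gsum n q f u (zeta q) := rfl

lemma map_gsum {n q : ℕ} {f : (Fin n → ZMod 2) → ZMod q} {u} {R S : Type*} [CommRing R]
    [CommRing S] (φ : R →+* S) (ξ : R) :
    φ (gsum n q f u ξ) = gsum n q f u (φ ξ) := by
  simp [gsum, map_sum, map_mul, map_pow]

lemma abs_eq_one_of_pow_eq_one {ξ : ℂ} {q : ℕ} (hq : q ≠ 0) (h : ξ ^ q = 1) :
    ‖ξ‖ = 1 := by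
  have h1 : ‖ξ‖ ^ q = 1 := by rw [← norm_pow, h, norm_one]
  rcases lt_trichotomy (‖ξ‖) 1 with hlt | heq | hgt
  · exfalso
    have := pow_lt_one₀ (norm_nonneg _) hlt hq
    rw [h1] at this; exact lt_irrefl _ this
  · exact heq
  · exfalso
    have := one_lt_pow₀ hgt hq
    rw [h1] at this; exact lt_irrefl _ this

lemma conj_of_pow_eq_one {ξ : ℂ} {q : ℕ} (hq : q ≠ 0) (h : ξ ^ q = 1) :
    (starRingEnd ℂ) ξ = ξ ^ (q - 1) := by
  have habs : ‖ξ‖ = 1 := by exact abs_eq_one_of_pow_eq_one hq h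
  have hmul : ξ * ξ ^ (q - 1) = 1 := by
    rw [← pow_succ']
    have : q - 1 + 1 = q := Nat.succ_pred_eq_of_pos (Nat.pos_of_ne_zero hq)
    rwa [this]
  rw [← RCLike.inv_eq_conj habs]
  exact inv_eq_of_mul_eq_one_right hmul

lemma conj_gsum {n q : ℕ} {f : (Fin n → ZMod 2) → ZMod q} {u} (hq : q ≠ 0) {ξ : ℂ}
    (h : ξ ^ q = 1) :
    (starRingEnd ℂ) (gsum n q f u ξ) = gsum n q f u (ξ ^ (q - 1)) := by
  simp only [gsum, map_sum, map_mul, map_pow, conj_of_pow_eq_one hq h, map_neg, map_one]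

lemma gsum_mul_gsum_eq {n q : ℕ} (hq : q ≠ 0) {f : (Fin n → ZMod 2) → ZMod q} {u}
    (hf : ‖gsum n q f u (zeta q)‖ = Real.sqrt 2 ^ n)
    {ξ : ℂ} (hξ : IsPrimitiveRoot ξ q) :
    gsum n q f u ξ * gsum n q f u (ξ ^ (q - 1)) = 2 ^ n := by
  classical
  set P : Polynomial ℚ :=
    (∑ x : Fin n → ZMod 2, ∑ y : Fin n → ZMod 2,
      Polynomial.C (((-1 : ℚ) ^ (∑ i, u i * x i : ZMod 2).val) *
          ((-1 : ℚ) ^ (∑ i, u i * y i : ZMod 2).val))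
        * Polynomial.X ^ ((f x).val + (q - 1) * (f y).val)) - Polynomial.C ((2 : ℚ) ^ n)
    with hP
  have heval : ∀ ζ : ℂ, Polynomial.aeval ζ P
      = gsum n q f u ζ * gsum n q f u (ζ ^ (q - 1)) - 2 ^ n := by
    intro ζ
    rw [hP]
    simp only [map_sub, map_sum, map_mul, map_pow, Polynomial.aeval_X, Polynomial.aeval_C]
    congr 1
    rw [gsum, gsum, Finset.sum_mul_sum]
    refine Finset.sum_congr rfl fun x _ => ?_
    refine Finset.sum_congr rfl fun y _ => ?_
    push_cast
    rw [pow_add, ← pow_mul]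
    ring
  have hzeta : Polynomial.aeval (zeta q) P = 0 := by
    rw [heval]
    have hc : gsum n q f u ((zeta q) ^ (q - 1)) = (starRingEnd ℂ) (gsum n q f u (zeta q)) :=
      (conj_gsum hq (zeta_prim q hq).pow_eq_one).symm
    rw [hc, Complex.mul_conj, ← Complex.sq_norm, hf]
    have : (Real.sqrt 2 ^ n) ^ 2 = 2 ^ n := by
      rw [← pow_mul, mul_comm, pow_mul, Real.sq_sqrt (by norm_num : (0:ℝ) ≤ 2)]
    push_cast [this]
    ring
  have hdvd : minpoly ℚ (zeta q) ∣ P := minpoly.dvd ℚ _ hzeta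
  have hcyc : Polynomial.cyclotomic q ℚ = minpoly ℚ (zeta q) :=
    Polynomial.cyclotomic_eq_minpoly_rat (zeta_prim q hq) (Nat.pos_of_ne_zero hq)
  have hcyc' : Polynomial.cyclotomic q ℚ = minpoly ℚ ξ :=
    Polynomial.cyclotomic_eq_minpoly_rat hξ (Nat.pos_of_ne_zero hq)
  have hxi : Polynomial.aeval ξ P = 0 := by
    obtain ⟨c, hc⟩ := hdvd
    rw [hc, map_mul, ← hcyc, hcyc', minpoly.aeval, zero_mul]
  rw [heval ξ] at hxi
  exact sub_eq_zero.mp hxi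
end Aux

lemma one_sub_dvd {R : Type*} [CommRing R] (x : R) (t : ℕ) : (1 - x) ∣ (1 - x ^ t) :=
  ⟨∑ i ∈ Finset.range t, x ^ i, by linear_combination (geom_sum_mul x t)⟩

lemma assoc_one_sub {R : Type*} [CommRing R] [IsDomain R] {q : ℕ} (hq : q ≠ 0) {ζ μ : R}
    (hζ : IsPrimitiveRoot ζ q) (hμ : IsPrimitiveRoot μ q) :
    Associated (1 - ζ) (1 - μ) := by
  haveI : NeZero q := ⟨hq⟩
  obtain ⟨t, -, ht⟩ := hζ.eq_pow_of_pow_eq_one hμ.pow_eq_one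
  obtain ⟨s, -, hs⟩ := hμ.eq_pow_of_pow_eq_one hζ.pow_eq_one
  exact associated_of_dvd_dvd (ht ▸ one_sub_dvd ζ t) (hs ▸ one_sub_dvd μ s)

lemma two_associated {R : Type*} [CommRing R] [IsDomain R] {k2 : ℕ} {ζ : R}
    (hζ : IsPrimitiveRoot ζ (2 ^ (k2 + 1 + 1))) :
    Associated (2 : R) ((1 - ζ) ^ 2 ^ (k2 + 1)) := by
  have h2 : ((2 : ℕ) : R) = Polynomial.eval 1 (Polynomial.cyclotomic (2 ^ (k2 + 1 + 1)) R) :=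
    (Polynomial.eval_one_cyclotomic_prime_pow (p := 2) (k2 + 1)).symm
  rw [Polynomial.cyclotomic_eq_prod_X_sub_primitiveRoots hζ, Polynomial.eval_prod] at h2
  simp only [Polynomial.eval_sub, Polynomial.eval_X, Polynomial.eval_C] at h2
  have hcard : (primitiveRoots (2 ^ (k2 + 1 + 1)) R).card = 2 ^ (k2 + 1) := by
    rw [hζ.card_primitiveRoots, Nat.totient_prime_pow Nat.prime_two (by omega)]
    simp
  have hassoc : Associated (∏ μ ∈ primitiveRoots (2 ^ (k2 + 1 + 1)) R, (1 - μ))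
      ((1 - ζ) ^ 2 ^ (k2 + 1)) := by
    have := Associated.prod (primitiveRoots (2 ^ (k2 + 1 + 1)) R) (fun μ => 1 - μ)
      (fun _ => 1 - ζ) (fun μ hμ => by
        have hμ' := (mem_primitiveRoots (Nat.pow_pos two_pos)).mp hμ
        exact assoc_one_sub (by positivity) hμ' hζ)
    simpa [Finset.prod_const, hcard] using this
  have : (2 : R) = ∏ μ ∈ primitiveRoots (2 ^ (k2 + 1 + 1)) R, (1 - μ) := by
    rw [← h2]; norm_num
  rw [this]
  exact hassoc

lemma totient_dvd_finrank {K : Type*} [Field K] [NumberField K] {x : K} {m : ℕ} (hm : m ≠ 0)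
    (hx : IsPrimitiveRoot x m) : m.totient ∣ Module.finrank ℚ K := by
  have hint : IsIntegral ℚ x := IsIntegral.of_finite ℚ x
  have h1 : Polynomial.cyclotomic m ℚ = minpoly ℚ x :=
    Polynomial.cyclotomic_eq_minpoly_rat hx (Nat.pos_of_ne_zero hm)
  have h2 : Module.finrank ℚ ℚ⟮x⟯ = m.totient := by
    rw [IntermediateField.adjoin.finrank hint, ← h1, Polynomial.natDegree_cyclotomic]
  exact ⟨Module.finrank ℚ⟮x⟯ K, by rw [← h2, Module.finrank_mul_finrank]⟩

lemma rootOfUnity_eq_pow {K : Type*} [Field K] [NumberField K] {k2 : ℕ} {ζ x : K}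
    (hζ : IsPrimitiveRoot ζ (2 ^ (k2 + 1 + 1)))
    (hrank : Module.finrank ℚ K = 2 ^ (k2 + 1))
    {M : ℕ} (hM : M ≠ 0) (hx : x ^ M = 1) : ∃ j, ζ ^ j = x := by
  set q := 2 ^ (k2 + 1 + 1) with hqdef
  have hq0 : q ≠ 0 := by positivity
  haveI : NeZero q := ⟨hq0⟩
  have hfin : IsOfFinOrder x := isOfFinOrder_iff_pow_eq_one.mpr ⟨M, Nat.pos_of_ne_zero hM, hx⟩
  set m := orderOf x with hm
  have hm0 : m ≠ 0 := hfin.orderOf_pos.ne'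
  set a := m.factorization 2 with ha
  set d := m / 2 ^ a with hd
  have hma : 2 ^ a * d = m := Nat.ordProj_mul_ordCompl_eq_self m 2
  have hd0 : d ≠ 0 := by
    intro h; rw [h, mul_zero] at hma; exact hm0 hma.symm
  have hdodd : ¬ 2 ∣ d := Nat.not_dvd_ordCompl Nat.prime_two hm0
  -- order of x ^ 2 ^ a is d
  have hxd : orderOf (x ^ 2 ^ a) = d := by
    rw [orderOf_pow' x (pow_ne_zero a two_ne_zero), ← hm,
      Nat.gcd_eq_right (Nat.ordProj_dvd m 2)]
  have hcopdq : Nat.Coprime d q := by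
    apply Nat.Coprime.pow_right
    rcases (Nat.prime_two.coprime_iff_not_dvd).mpr hdodd with h
    exact h.symm
  have horder : orderOf (x ^ 2 ^ a * ζ) = d * q := by
    rw [(Commute.all (x ^ 2 ^ a) ζ).orderOf_mul_eq_mul_orderOf_of_coprime
      (by rw [hxd, ← hζ.eq_orderOf]; exact hcopdq), hxd, ← hζ.eq_orderOf]
  have hprim : IsPrimitiveRoot (x ^ 2 ^ a * ζ) (d * q) := by
    rw [← horder]; exact IsPrimitiveRoot.orderOf _
  have hq_tot : q.totient = 2 ^ (k2 + 1) := by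
    rw [hqdef, Nat.totient_prime_pow Nat.prime_two (by omega)]
    simp
  have hdq : d.totient * q.totient ∣ 2 ^ (k2 + 1) := by
    rw [← Nat.totient_mul hcopdq, ← hrank]
    exact totient_dvd_finrank (by positivity) hprim
  have hd1 : d = 1 := by
    have hle := Nat.le_of_dvd (by positivity) hdq
    rw [hq_tot] at hle
    have h1 : 0 < d.totient := Nat.totient_pos.mpr (Nat.pos_of_ne_zero hd0)
    have h2 : 0 < (2:ℕ) ^ (k2+1) := by positivity
    have hdt1 : d.totient = 1 := by nlinarith
    rcases Nat.totient_eq_one_iff.mp hdt1 with h | h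
    · exact h
    · exact absurd (by rw [h]) hdodd
  have hm2 : m = 2 ^ a := by rw [← hma, hd1, mul_one]
  -- bound a
  have hmdvd : m ∣ q := by
    rcases Nat.eq_zero_or_pos a with ha0 | hapos
    · rw [hm2, ha0]; simpa using one_dvd q
    · have hxprim : IsPrimitiveRoot x m := IsPrimitiveRoot.orderOf x
      have hta : m.totient ∣ 2 ^ (k2 + 1) := hrank ▸ totient_dvd_finrank hm0 hxprim
      rw [hm2, Nat.totient_prime_pow Nat.prime_two hapos] at hta
      norm_num at hta
      have hle : a - 1 ≤ k2 + 1 := by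
        exact (Nat.pow_dvd_pow_iff_le_right (one_lt_two)).mp hta
      rw [hm2, hqdef]
      exact pow_dvd_pow 2 (by omega)
  have hxq : x ^ q = 1 := orderOf_dvd_iff_pow_eq_one.mp (hm ▸ hmdvd)
  obtain ⟨j, -, hj⟩ := hζ.eq_pow_of_pow_eq_one hxq
  exact ⟨j, hj⟩

lemma zeta_pow (q : ℕ) (e : ℕ) :
    zeta q ^ e = Complex.exp (2 * Real.pi * Complex.I * e / q) := by
  rw [zeta, ← Complex.exp_nat_mul]
  congr 1
  ring

lemma zeta_pow_fourth {q k2 : ℕ} (hq : q = 2 ^ (k2 + 2)) : zeta q ^ 2 ^ k2 = Complex.I := by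
  subst hq
  rw [zeta_pow]
  have harg : 2 * (Real.pi : ℂ) * Complex.I * ((2 ^ k2 : ℕ) : ℂ) / (((2 ^ (k2 + 2) : ℕ)) : ℂ)
      = ((Real.pi / 2 : ℝ) : ℂ) * Complex.I := by
    have h1 : (((2 ^ (k2 + 2) : ℕ)) : ℂ) = 4 * 2 ^ k2 := by push_cast [pow_add]; ring
    have h2 : ((2 : ℂ)) ^ k2 ≠ 0 := pow_ne_zero _ two_ne_zero
    rw [h1]
    push_cast
    field_simp
    ring
  rw [harg, Complex.exp_mul_I, ← Complex.ofReal_cos, ← Complex.ofReal_sin,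
    Real.cos_pi_div_two, Real.sin_pi_div_two]
  simp

lemma zeta_pow_eighth {q k3 : ℕ} (hq : q = 2 ^ (k3 + 3)) :
    ((Real.sqrt 2 : ℝ) : ℂ) * zeta q ^ 2 ^ k3 = 1 + Complex.I := by
  subst hq
  rw [zeta_pow]
  have harg : 2 * (Real.pi : ℂ) * Complex.I * ((2 ^ k3 : ℕ) : ℂ) / (((2 ^ (k3 + 3) : ℕ)) : ℂ)
      = ((Real.pi / 4 : ℝ) : ℂ) * Complex.I := by
    have h1 : (((2 ^ (k3 + 3) : ℕ)) : ℂ) = 8 * 2 ^ k3 := by push_cast [pow_add]; ring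
    have h2 : ((2 : ℂ)) ^ k3 ≠ 0 := pow_ne_zero _ two_ne_zero
    rw [h1]
    push_cast
    field_simp
    ring
  rw [harg, Complex.exp_mul_I, ← Complex.ofReal_cos, ← Complex.ofReal_sin,
    Real.cos_pi_div_four, Real.sin_pi_div_four]
  have h2 : ((Real.sqrt 2 : ℝ) : ℂ) * ((Real.sqrt 2 / 2 : ℝ) : ℂ) = 1 := by
    have h3 : Real.sqrt 2 * (Real.sqrt 2 / 2) = 1 := by
      have h4 := Real.sq_sqrt (by norm_num : (0:ℝ) ≤ 2)
      nlinarith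
    rw [← Complex.ofReal_mul, h3, Complex.ofReal_one]
  push_cast at h2 ⊢
  linear_combination (1 + Complex.I) * h2

lemma zeta_two : zeta (2 ^ 1) = -1 := by
  rw [zeta]
  have harg : 2 * (Real.pi : ℂ) * Complex.I / (((2 ^ 1 : ℕ)) : ℂ) = (Real.pi : ℂ) * Complex.I := by
    push_cast; field_simp
  rw [harg, Complex.exp_pi_mul_I]

lemma zeta_four : zeta (2 ^ 2) = Complex.I := by
  have := zeta_pow_fourth (q := 2 ^ 2) (k2 := 0) rfl
  simpa using this

lemma pow_val_natCast {q : ℕ} (hq : q ≠ 0) {x : ℂ} (hx : x ^ q = 1) (a : ℕ) :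
    x ^ ((a : ZMod q)).val = x ^ a := by
  haveI : NeZero q := ⟨hq⟩
  rw [ZMod.val_natCast]
  conv_rhs => rw [← Nat.div_add_mod a q]
  rw [pow_add, pow_mul, hx, one_pow, one_mul]

lemma sqrt_two_pow_even (t : ℕ) : Real.sqrt 2 ^ (t + t) = 2 ^ t := by
  rw [← two_mul, pow_mul, Real.sq_sqrt (by norm_num : (0:ℝ) ≤ 2)]


lemma zeta_two_plain : zeta 2 = -1 := by
  rw [zeta]
  have harg : 2 * (Real.pi : ℂ) * Complex.I / ((2 : ℕ) : ℂ) = (Real.pi : ℂ) * Complex.I := by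
    push_cast; ring
  rw [harg, Complex.exp_pi_mul_I]

lemma key {q k2 n : ℕ} (hq : q = 2 ^ (k2 + 2)) {f : (Fin n → ZMod 2) → ZMod q}
    (hf : IsGbent n q f) (u : Fin n → ZMod 2) :
    ∃ j : ℕ, gwht n q f u = zeta q ^ j * (1 + Complex.I) ^ n := by
  classical
  have hq0 : q ≠ 0 := by rw [hq]; positivity
  have hfu : ‖gsum n q f u (zeta q)‖ = Real.sqrt 2 ^ n := by
    rw [← gwht_eq_gsum]; exact hf u
  -- the cyclotomic field
  set pq : ℕ+ := (2 : ℕ+) ^ (k2 + 1 + 1) with hpqdef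
  have hpq : (pq : ℕ) = q := by
    rw [hpqdef, hq]; push_cast; norm_num
  set K := CyclotomicField pq ℚ with hKdef
  haveI : IsCyclotomicExtension {(pq : ℕ)} ℚ K := by
    haveI : NeZero (((pq : ℕ) : ℚ)) := ⟨by exact_mod_cast (NeZero.ne (pq : ℕ))⟩
    exact CyclotomicField.isCyclotomicExtension _ _
  haveI hNF : NumberField K := IsCyclotomicExtension.numberField {(pq : ℕ)} ℚ K
  set ζK : K := IsCyclotomicExtension.zeta (pq : ℕ) ℚ K with hζKdef
  have hζpq : IsPrimitiveRoot ζK (pq : ℕ) := IsCyclotomicExtension.zeta_spec (pq : ℕ) ℚ K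
  have hζ : IsPrimitiveRoot ζK q := hpq ▸ hζpq
  have hirr : Irreducible (Polynomial.cyclotomic (pq : ℕ) ℚ) :=
    Polynomial.cyclotomic.irreducible_rat pq.pos
  -- the distinguished embedding
  have hzmem : zeta q ∈ primitiveRoots (pq : ℕ) ℂ := by
    rw [hpq]
    exact (mem_primitiveRoots (Nat.pos_of_ne_zero hq0)).mpr (zeta_prim q hq0)
  set φa : K →ₐ[ℚ] ℂ := (hζpq.embeddingsEquivPrimitiveRoots ℂ hirr).symm ⟨zeta q, hzmem⟩ with hφadef
  have hφζ : φa ζK = zeta q := by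
    have h1 := hζpq.embeddingsEquivPrimitiveRoots_apply_coe ℂ hirr φa
    rw [hφadef, Equiv.apply_symm_apply] at h1
    rw [hφadef]
    exact h1.symm
  set φ₀ : K →+* ℂ := φa.toRingHom with hφ₀def
  have hφ₀ζ : φ₀ ζK = zeta q := hφζ
  -- all embeddings give absolute value 2^(n/2)
  have hnormα : ∀ φ : K →+* ℂ, (‖φ (gsum n q f u ζK)‖)^2 = 2 ^ n := by
    intro φ
    have hζφ : IsPrimitiveRoot (φ ζK) q := hζ.map_of_injective φ.injective
    have h := gsum_mul_gsum_eq hq0 hfu hζφ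
    rw [← conj_gsum hq0 hζφ.pow_eq_one, Complex.mul_conj, ← Complex.sq_norm] at h
    rw [map_gsum φ ζK]
    exact_mod_cast h
  -- ring of integers versions
  set ζO : 𝓞 K := hζpq.toInteger with hζOdef
  have hcoeζ : algebraMap (𝓞 K) K ζO = ζK := rfl
  have hζO : IsPrimitiveRoot ζO q := by
    have := hζpq.toInteger_isPrimitiveRoot
    exact hpq ▸ this
  set π : 𝓞 K := 1 - ζO with hπdef
  have hπprime : Prime π := by
    haveI : IsCyclotomicExtension {2 ^ (k2 + 1 + 1)} ℚ K := by
      convert (inferInstance : IsCyclotomicExtension {(pq : ℕ)} ℚ K) using 2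
      rw [hpq, hq]
    have h1 : Prime (hζpq.toInteger - 1) :=
      IsPrimitiveRoot.zeta_sub_one_prime (p := 2) (k := k2 + 1) hζpq
    have h2 : Associated (hζpq.toInteger - 1) π := ⟨-1, by rw [hπdef, Units.val_neg, Units.val_one]; ring⟩
    exact h2.prime h1
  -- the element i
  set iO : 𝓞 K := ζO ^ 2 ^ k2 with hiOdef
  have hiO2 : iO ^ 2 = -1 := by
    have hhalf : (ζO ^ 2 ^ (k2 + 1)) = -1 := by
      have hsq : (ζO ^ 2 ^ (k2 + 1)) * (ζO ^ 2 ^ (k2 + 1)) = 1 := by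
        rw [← pow_add]
        have h3 : 2 ^ (k2 + 1) + 2 ^ (k2 + 1) = q := by
          rw [hq, ← two_mul, ← pow_succ']
        rw [h3]
        exact hζO.pow_eq_one
      rcases mul_self_eq_one_iff.mp hsq with h | h
      · exfalso
        refine hζO.pow_ne_one_of_pos_of_lt (by positivity) ?_ h
        rw [hq]
        exact Nat.pow_lt_pow_right one_lt_two (by omega)
      · exact h
    rw [hiOdef, ← pow_mul, ← pow_succ]
    exact hhalf
  have h2eq : (1 + iO) * (1 - iO) = 2 := by
    have h4 : (1 + iO) * (1 - iO) = 1 - iO ^ 2 := by ring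
    rw [h4, hiO2]; ring
  -- conjugate sum identity
  set αO : 𝓞 K := gsum n q f u ζO with hαOdef
  set βO : 𝓞 K := gsum n q f u (ζO ^ (q - 1)) with hβOdef
  have hcoeα : algebraMap (𝓞 K) K αO = gsum n q f u ζK := by
    rw [hαOdef, map_gsum, hcoeζ]
  have hKconj : gsum n q f u ζK * gsum n q f u (ζK ^ (q - 1)) = 2 ^ n := by
    apply φ₀.injective
    rw [map_mul, map_gsum, map_gsum, map_pow, hφ₀ζ, map_pow, map_ofNat]
    exact gsum_mul_gsum_eq hq0 hfu (zeta_prim q hq0)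
  have hαβ : αO * βO = 2 ^ n := by
    apply RingOfIntegers.coe_injective
    rw [map_mul, map_pow, map_ofNat, hαOdef, hβOdef, map_gsum, map_gsum, map_pow, hcoeζ]
    exact hKconj
  -- divisibility by the prime
  have h2assoc : Associated (2 : 𝓞 K) (π ^ 2 ^ (k2 + 1)) := by
    have := two_associated (R := 𝓞 K) (k2 := k2) (by rw [show (2:ℕ) ^ (k2+1+1) = 2 ^ (k2+2) by norm_num, ← hq]; exact hζO)
    exact this
  have hαdvd : αO ∣ π ^ (2 ^ (k2 + 1) * n) := by
    have h1 : αO ∣ (2 : 𝓞 K) ^ n := ⟨βO, hαβ.symm⟩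
    have h2 : Associated ((2 : 𝓞 K) ^ n) (π ^ (2 ^ (k2 + 1) * n)) := by
      rw [pow_mul]
      exact h2assoc.pow_pow
    exact h1.trans h2.dvd
  have hidvd : (1 + iO) ∣ π ^ 2 ^ (k2 + 1) := by
    have h1 : (1 + iO) ∣ (2 : 𝓞 K) := ⟨1 - iO, h2eq.symm⟩
    exact h1.trans h2assoc.dvd
  obtain ⟨mα, hmαle, wα, hwα⟩ : ∃ m ≤ 2 ^ (k2+1) * n, ∃ w : (𝓞 K)ˣ, π ^ m * w = αO := by
    obtain ⟨m, hm, hass⟩ := (dvd_prime_pow hπprime _).mp hαdvd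
    exact ⟨m, hm, hass.symm⟩
  obtain ⟨mβ, hmβle, wβ, hwβ⟩ : ∃ m ≤ 2 ^ (k2+1), ∃ w : (𝓞 K)ˣ, (1 + iO) * w = π ^ m := by
    obtain ⟨m, hm, hass⟩ := (dvd_prime_pow hπprime _).mp hidvd
    exact ⟨m, hm, hass⟩
  have hipow : (1 + iO) ^ n * (wβ ^ n : (𝓞 K)ˣ) = π ^ (mβ * n) := by
    rw [pow_mul, ← hwβ]
    push_cast
    rw [mul_pow]
  -- finrank
  have hrank : Module.finrank ℚ K = 2 ^ (k2 + 1) := by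
    have h1 : Module.finrank ℚ K = (pq : ℕ).totient := IsCyclotomicExtension.finrank K hirr
    rw [h1, hpq, hq, Nat.totient_prime_pow Nat.prime_two (by omega)]
    norm_num
  -- norms of the relevant elements under all embeddings
  have hnormi : ∀ φ : K →+* ℂ, (‖φ (algebraMap (𝓞 K) K (1 + iO))‖)^2 = 2 := by
    intro φ
    have hI2 : (φ (algebraMap (𝓞 K) K iO))^2 = -1 := by
      rw [← map_pow, ← map_pow, hiO2]
      simp
    have hzI : φ (algebraMap (𝓞 K) K iO) = Complex.I ∨
        φ (algebraMap (𝓞 K) K iO) = -Complex.I := by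
      have h5 : (φ (algebraMap (𝓞 K) K iO) - Complex.I) *
          (φ (algebraMap (𝓞 K) K iO) + Complex.I) = 0 := by
        linear_combination hI2 - Complex.I_sq
      rcases mul_eq_zero.mp h5 with h | h
      · left; exact sub_eq_zero.mp h
      · right; exact eq_neg_of_add_eq_zero_left h
    rw [map_add, map_add, map_one, map_one]
    rcases hzI with h | h <;> rw [h] <;>
      norm_num [Complex.sq_norm, Complex.normSq_apply]
  have hnormiK : ∀ φ : K →+* ℂ,
      (‖φ (algebraMap (𝓞 K) K ((1 + iO) ^ n))‖)^2 = 2 ^ n := by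
    intro φ
    rw [map_pow, map_pow, norm_pow, ← pow_mul, mul_comm n 2, pow_mul, hnormi φ]
  have hnormαK : ∀ φ : K →+* ℂ,
      (‖φ (algebraMap (𝓞 K) K αO)‖)^2 = 2 ^ n := by
    intro φ
    rw [hcoeα]
    exact hnormα φ
  -- cancellation lemma
  have hcancel : ∀ (γ A B : 𝓞 K), γ * A = B →
      (∀ φ : K →+* ℂ, (‖φ (algebraMap (𝓞 K) K A)‖)^2 = 2 ^ n) →
      (∀ φ : K →+* ℂ, (‖φ (algebraMap (𝓞 K) K B)‖)^2 = 2 ^ n) →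
      ∀ φ : K →+* ℂ, (‖φ (algebraMap (𝓞 K) K γ)‖)^2 = 1 := by
    intro γ A B hmul hA hB φ
    have h6 : φ (algebraMap (𝓞 K) K γ) * φ (algebraMap (𝓞 K) K A)
        = φ (algebraMap (𝓞 K) K B) := by
      rw [← map_mul, ← map_mul, hmul]
    have h7 := congrArg (fun z : ℂ => ‖z‖ ^ 2) h6
    simp only [norm_mul, mul_pow] at h7
    rw [hA, hB] at h7
    have h2n : ((2:ℝ)) ^ n ≠ 0 := by positivity
    exact mul_right_cancel₀ h2n (by rw [h7, one_mul])
  -- root of unity step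
  have hunitstep : ∀ γ : 𝓞 K, (∀ φ : K →+* ℂ, (‖φ (algebraMap (𝓞 K) K γ)‖)^2 = 1) →
      IsUnit γ ∧ ∃ M : ℕ, M ≠ 0 ∧ (algebraMap (𝓞 K) K γ) ^ M = 1 := by
    intro γ hγ
    have hγ1 : ∀ φ : K →+* ℂ, ‖φ (algebraMap (𝓞 K) K γ)‖ = 1 := by
      intro φ
      have h9 := hγ φ
      nlinarith [norm_nonneg (φ (algebraMap (𝓞 K) K γ))]
    obtain ⟨M, hM, hpow⟩ := NumberField.Embeddings.pow_eq_one_of_norm_eq_one K ℂ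
      (RingOfIntegers.isIntegral_coe γ) hγ1
    have hpowO : γ ^ M = 1 := by
      apply RingOfIntegers.coe_injective
      rw [map_pow, map_one]
      exact hpow
    have hγunit : IsUnit γ := by
      apply IsUnit.of_mul_eq_one (a := γ) (γ ^ (M - 1))
      rw [← pow_succ']
      have h10 : M - 1 + 1 = M := Nat.succ_pred_eq_of_pos hM
      rw [h10]
      exact hpowO
    exact ⟨hγunit, M, hM.ne', hpow⟩
  -- dichotomy
  have hmain : ∃ γ : 𝓞 K, γ * (1 + iO) ^ n = αO ∧
      ∃ M : ℕ, M ≠ 0 ∧ (algebraMap (𝓞 K) K γ) ^ M = 1 := by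
    rcases le_or_gt (mβ * n) mα with hle | hlt
    · set γ : 𝓞 K := π ^ (mα - mβ * n) * ↑wα * ↑(wβ ^ n) with hγdef
      have hγα : γ * (1 + iO) ^ n = αO := by
        calc π ^ (mα - mβ * n) * ↑wα * ↑(wβ ^ n) * (1 + iO) ^ n
            = π ^ (mα - mβ * n) * ((1 + iO) ^ n * ↑(wβ ^ n)) * ↑wα := by ring
          _ = π ^ (mα - mβ * n) * π ^ (mβ * n) * ↑wα := by rw [hipow]
          _ = π ^ mα * ↑wα := by rw [← pow_add, Nat.sub_add_cancel hle]
          _ = αO := hwα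
      obtain ⟨-, M, hM, hpow⟩ := hunitstep γ (hcancel γ _ _ hγα hnormiK hnormαK)
      exact ⟨γ, hγα, M, hM, hpow⟩
    · set δ : 𝓞 K := π ^ (mβ * n - mα) * ↑wα⁻¹ * ↑((wβ ^ n)⁻¹) with hδdef
      have hδα : δ * αO = (1 + iO) ^ n := by
        have hiOn : (1 + iO) ^ n = π ^ (mβ * n) * ↑((wβ ^ n)⁻¹) := by
          rw [← hipow]
          rw [mul_assoc]
          rw [← Units.val_mul, mul_inv_cancel, Units.val_one, mul_one]
        calc δ * αO = δ * (π ^ mα * ↑wα) := by rw [hwα]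
          _ = π ^ (mβ * n - mα) * π ^ mα * (↑wα⁻¹ * ↑wα) * ↑((wβ ^ n)⁻¹) := by
              rw [hδdef]; ring
          _ = π ^ (mβ * n) * (↑wα⁻¹ * ↑wα) * ↑((wβ ^ n)⁻¹) := by
              rw [← pow_add, Nat.sub_add_cancel hlt.le]
          _ = π ^ (mβ * n) * ↑((wβ ^ n)⁻¹) := by
              rw [← Units.val_mul, inv_mul_cancel, Units.val_one, mul_one]
          _ = (1 + iO) ^ n := hiOn.symm
      obtain ⟨hδunit, M, hM, hpow⟩ := hunitstep δ (hcancel δ _ _ hδα hnormαK hnormiK)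
      obtain ⟨dU, hdU⟩ := hδunit
      refine ⟨↑dU⁻¹, ?_, M, hM, ?_⟩
      · rw [← hδα, ← hdU, ← mul_assoc, ← Units.val_mul, inv_mul_cancel, Units.val_one, one_mul]
      · have h11 : (algebraMap (𝓞 K) K ↑dU⁻¹) * (algebraMap (𝓞 K) K δ) = 1 := by
          rw [← map_mul, ← hdU, ← Units.val_mul, inv_mul_cancel, Units.val_one, map_one]
        have h12 := congrArg (fun z => z ^ M) h11
        simp only [mul_pow, one_pow] at h12
        rw [hpow, mul_one] at h12
        exact h12
  obtain ⟨γ, hγα, M, hM, hpow⟩ := hmain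
  -- γ is a power of ζ
  have hζ' : IsPrimitiveRoot ζK (2 ^ (k2 + 1 + 1)) := by
    rw [show (2:ℕ) ^ (k2 + 1 + 1) = q by rw [hq]]
    exact hζ
  obtain ⟨j, hj⟩ := rootOfUnity_eq_pow hζ' hrank hM hpow
  refine ⟨j, ?_⟩
  have hiK : φ₀ (algebraMap (𝓞 K) K (1 + iO)) = 1 + Complex.I := by
    rw [map_add, map_add, map_one, map_one, hiOdef, map_pow, map_pow, hcoeζ, hφ₀ζ]
    rw [zeta_pow_fourth hq]
  calc gwht n q f u = φ₀ (algebraMap (𝓞 K) K αO) := by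
        rw [gwht_eq_gsum, hcoeα, map_gsum, hφ₀ζ]
    _ = φ₀ (algebraMap (𝓞 K) K γ) * φ₀ (algebraMap (𝓞 K) K ((1 + iO) ^ n)) := by
        rw [← map_mul, ← map_mul, hγα]
    _ = zeta q ^ j * (1 + Complex.I) ^ n := by
        rw [← hj, map_pow, hφ₀ζ, map_pow, map_pow, hiK]


end AuxiliaryLemmas

theorem statement_1 (n k : ℕ) (hn : 1 ≤ n) (hk : 1 ≤ k)
    (f : (Fin n → ZMod 2) → ZMod (2 ^ k)) (hf : IsGbent n (2 ^ k) f) :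
    ((Even n ∨ 3 ≤ k) →
      ∃ fstar : (Fin n → ZMod 2) → ZMod (2 ^ k),
        ∀ u, gwht n (2 ^ k) f u =
          ((Real.sqrt 2 ^ n : ℝ) : ℂ) * zeta (2 ^ k) ^ (fstar u).val) ∧
    ((Odd n ∧ k = 2) →
      ∀ u, ∃ ε₁ ε₂ : ℂ, (ε₁ = 1 ∨ ε₁ = -1) ∧ (ε₂ = 1 ∨ ε₂ = -1) ∧
        gwht n (2 ^ k) f u = (2 : ℂ) ^ ((n - 1) / 2) * (ε₁ + ε₂ * Complex.I)) := by
  constructor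
  · intro hcase
    have hex : ∀ u, ∃ c : ZMod (2 ^ k), gwht n (2 ^ k) f u
        = ((Real.sqrt 2 ^ n : ℝ) : ℂ) * zeta (2 ^ k) ^ c.val := by
      intro u
      by_cases hk3 : 3 ≤ k
      · obtain ⟨k3, rfl⟩ : ∃ k3, k = k3 + 3 := ⟨k - 3, by omega⟩
        obtain ⟨j, hj⟩ := key (q := 2 ^ (k3 + 3)) (k2 := k3 + 1) (by norm_num) hf u
        refine ⟨((j + n * 2 ^ k3 : ℕ) : ZMod (2 ^ (k3 + 3))), ?_⟩
        have hq0 : (2:ℕ) ^ (k3 + 3) ≠ 0 := by positivity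
        rw [hj, pow_val_natCast hq0 (zeta_prim _ hq0).pow_eq_one]
        calc zeta (2 ^ (k3 + 3)) ^ j * (1 + Complex.I) ^ n
            = zeta (2 ^ (k3 + 3)) ^ j *
                (((Real.sqrt 2 : ℝ) : ℂ) * zeta (2 ^ (k3 + 3)) ^ 2 ^ k3) ^ n := by
              rw [zeta_pow_eighth rfl]
          _ = ((Real.sqrt 2 ^ n : ℝ) : ℂ) * zeta (2 ^ (k3 + 3)) ^ (j + n * 2 ^ k3) := by
              rw [mul_pow, ← pow_mul, pow_add, mul_comm (2 ^ k3) n]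
              push_cast
              ring
      · have hEven : Even n := hcase.resolve_right hk3
        obtain ⟨t, ht⟩ := hEven
        interval_cases k
        · -- k = 1
          classical
          set m : ℤ := ∑ x : Fin n → ZMod 2,
            (-1 : ℤ) ^ (f x).val * (-1) ^ (∑ i, u i * x i : ZMod 2).val with hm
          have hcast : gwht n (2 ^ 1) f u = (m : ℂ) := by
            rw [gwht, hm]
            push_cast
            refine Finset.sum_congr rfl fun x _ => ?_
            rw [zeta_two_plain]
          have habs := hf u
          rw [hcast, Complex.norm_intCast, ht, sqrt_two_pow_even] at habs
          have habsZ : |m| = 2 ^ t := by exact_mod_cast habs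
          rcases abs_eq (by positivity : (0:ℤ) ≤ 2 ^ t) |>.mp habsZ with hpos | hneg
          · refine ⟨0, ?_⟩
            rw [hcast, hpos, ht, sqrt_two_pow_even]
            simp
          · refine ⟨1, ?_⟩
            rw [hcast, hneg, ht, sqrt_two_pow_even]
            have hval : (1 : ZMod (2 ^ 1)).val = 1 := rfl
            rw [hval, zeta_two, pow_one]
            push_cast
            ring
        · -- k = 2
          obtain ⟨j, hj⟩ := key (q := 2 ^ 2) (k2 := 0) rfl hf u
          refine ⟨((j + t : ℕ) : ZMod (2 ^ 2)), ?_⟩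
          have hq0 : (2:ℕ) ^ 2 ≠ 0 := by norm_num
          rw [hj, pow_val_natCast hq0 (zeta_prim _ hq0).pow_eq_one, zeta_four, ht,
            sqrt_two_pow_even]
          have hpow2 : (1 + Complex.I) ^ (t + t) = 2 ^ t * Complex.I ^ t := by
            rw [pow_add, ← mul_pow,
              show (1 + Complex.I) * (1 + Complex.I) = 2 * Complex.I by
                linear_combination Complex.I_sq,
              mul_pow]
          rw [hpow2, pow_add]
          push_cast
          ring
    choose fstar hfstar using hex
    exact ⟨fstar, hfstar⟩
  · rintro ⟨hodd, rfl⟩ u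
    obtain ⟨t, ht⟩ := hodd
    obtain ⟨j, hj⟩ := key (q := 2 ^ 2) (k2 := 0) rfl hf u
    have hIsq : Complex.I ^ 2 = -1 := Complex.I_sq
    have h2I : (1 + Complex.I) ^ 2 = 2 * Complex.I := by linear_combination hIsq
    have hI4 : Complex.I ^ 4 = 1 := by
      rw [show (4:ℕ) = 2 * 2 from rfl, pow_mul, hIsq]
      norm_num
    obtain ⟨r, hrlt, hreq⟩ : ∃ r, r < 4 ∧ (j + t) % 4 = r :=
      ⟨_, Nat.mod_lt _ (by norm_num), rfl⟩
    have hstep : gwht n (2 ^ 2) f u = (2:ℂ) ^ t * (Complex.I ^ r * (1 + Complex.I)) := by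
      rw [hj, zeta_four, ht, pow_succ, pow_mul, h2I, mul_pow]
      have hmod : Complex.I ^ r = Complex.I ^ (j + t) := by
        rw [← hreq]
        conv_rhs => rw [← Nat.div_add_mod (j + t) 4]
        rw [pow_add, pow_mul, hI4, one_pow, one_mul]
      rw [hmod, pow_add]
      ring
    have hhalf : (n - 1) / 2 = t := by omega
    rw [hstep, hhalf]
    interval_cases r
    · exact ⟨1, 1, Or.inl rfl, Or.inl rfl, by norm_num⟩
    · refine ⟨-1, 1, Or.inr rfl, Or.inl rfl, ?_⟩
      rw [pow_one]
      linear_combination (2:ℂ) ^ t * hIsq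
    · refine ⟨-1, -1, Or.inr rfl, Or.inr rfl, ?_⟩
      linear_combination (2:ℂ) ^ t * (1 + Complex.I) * hIsq
    · refine ⟨1, -1, Or.inl rfl, Or.inr rfl, ?_⟩
      linear_combination ((2:ℂ) ^ t * (Complex.I + Complex.I ^ 2 - 1)) * hIsq
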